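/- Assume h^H b ≠ 0, h and b are linearly independent (so b_⊥ ≠ 0), and P_t·|h^H b|²/‖b‖² ≤ σ²γ̄ ≤ P_t·‖h‖². Then every feasible pair (R₁, R') of the rank-relaxed problem (and hence of problem (22)) satisfies b^H(R₁+R')b ≤ ( |β|·√(σ²γ̄)/‖h‖ + ‖b_⊥‖·√(P_t − σ²γ̄/‖h‖²) )². Consequently the beamformer w̄ = √(σ²γ̄/‖h‖²)·h̄·(β/|β|) + √(P_t − σ²γ̄/‖h‖²)·b̄_⊥ of Eq. (23) yields an optimal solution (w̄ w̄^H, 0) of problem (22). (Theorem 1, second case: optimality.) -/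

import Mathlib

open Matrix Finset ComplexOrder

/-- The (real-valued) quadratic form `vᴴ R v` for a complex matrix `R`. -/
noncomputable def quadForm {M : ℕ} (R : Matrix (Fin M) (Fin M) ℂ) (v : Fin M → ℂ) : ℝ :=
  (star v ⬝ᵥ (R *ᵥ v)).re

/-- Squared Euclidean norm of a complex vector. -/
noncomputable def normSqV {M : ℕ} (v : Fin M → ℂ) : ℝ :=
  ∑ i, Complex.normSq (v i)

/-- Euclidean norm of a complex vector. -/
noncomputable def normV {M : ℕ} (v : Fin M → ℂ) : ℝ :=
  Real.sqrt (normSqV v)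

/-- Feasibility for the rank-relaxed problem: `R₁, R'` Hermitian PSD,
`hᴴ R₁ h ≥ σ²γ̄` and `tr(R₁ + R') ≤ P_t`. -/
def FeasibleRelaxed {M : ℕ} (Pt σ γ : ℝ) (h : Fin M → ℂ)
    (R₁ R' : Matrix (Fin M) (Fin M) ℂ) : Prop :=
  R₁.PosSemidef ∧ R'.PosSemidef ∧ σ ^ 2 * γ ≤ quadForm R₁ h ∧ ((R₁ + R').trace).re ≤ Pt

/-- Feasibility for problem (22): additionally `rank R₁ ≤ 1` and `rank R' ≤ M - 1`. -/
def Feasible22 {M : ℕ} (Pt σ γ : ℝ) (h : Fin M → ℂ)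
    (R₁ R' : Matrix (Fin M) (Fin M) ℂ) : Prop :=
  FeasibleRelaxed Pt σ γ h R₁ R' ∧ R₁.rank ≤ 1 ∧ R'.rank ≤ M - 1

section Helpers

lemma dot_self_eq {M : ℕ} (v : Fin M → ℂ) : star v ⬝ᵥ v = (normSqV v : ℂ) := by
  simp [dotProduct, normSqV, Complex.normSq_eq_conj_mul_self, Pi.star_apply]

lemma normSqV_nonneg {M : ℕ} (v : Fin M → ℂ) : 0 ≤ normSqV v :=
  Finset.sum_nonneg fun i _ => Complex.normSq_nonneg _

lemma normSqV_pos {M : ℕ} {v : Fin M → ℂ} (hv : v ≠ 0) : 0 < normSqV v := by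
  rcases (normSqV_nonneg v).lt_or_eq with h | h
  · exact h
  · exfalso; apply hv
    have := (Finset.sum_eq_zero_iff_of_nonneg (fun i _ => Complex.normSq_nonneg (v i))).mp h.symm
    funext i
    exact Complex.normSq_eq_zero.mp (this i (Finset.mem_univ i))

lemma mulVec_vecMulVec' {M : ℕ} (w v x : Fin M → ℂ) :
    (vecMulVec w v) *ᵥ x = (v ⬝ᵥ x) • w := by
  funext i
  simp only [mulVec, vecMulVec_apply, dotProduct, Pi.smul_apply, smul_eq_mul, Finset.sum_mul,
    Finset.mul_sum]
  exact Finset.sum_congr rfl fun j _ => by ring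

lemma cs {M : ℕ} (u v : Fin M → ℂ) :
    Complex.normSq (star u ⬝ᵥ v) ≤ normSqV u * normSqV v := by
  by_cases hu : u = 0
  · simp [hu, dotProduct]; exact mul_nonneg (normSqV_nonneg _) (normSqV_nonneg _)
  · set a : ℝ := normSqV u with ha
    have hapos : 0 < a := normSqV_pos hu
    set c : ℂ := star u ⬝ᵥ v with hc
    set y : Fin M → ℂ := (a : ℂ) • v - c • u with hy
    have h1 : star v ⬝ᵥ u = star c := by rw [star_dotProduct]
    have key : star y ⬝ᵥ y = (a : ℂ) * ((a : ℂ) * (normSqV v : ℂ) - (Complex.normSq c : ℂ)) := by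
      simp only [hy, star_sub, star_smul, sub_dotProduct, dotProduct_sub, smul_dotProduct,
        dotProduct_smul, smul_eq_mul, dot_self_eq, h1, ← hc, Complex.star_def,
        Complex.conj_ofReal]
      rw [show (starRingEnd ℂ) c * c = (Complex.normSq c : ℂ) by
        rw [mul_comm]; exact Complex.mul_conj c]
      ring
    have h0 : (0:ℝ) ≤ (star y ⬝ᵥ y).re := by
      rw [dot_self_eq]; exact_mod_cast normSqV_nonneg y
    rw [key] at h0
    simp only [Complex.mul_re, Complex.sub_re, Complex.ofReal_re, Complex.ofReal_im,
      Complex.mul_im, Complex.sub_im] at h0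
    nlinarith [h0]

lemma abs_dot_le {M : ℕ} (u v : Fin M → ℂ) :
    ‖star u ⬝ᵥ v‖ ≤ Real.sqrt (normSqV u) * Real.sqrt (normSqV v) := by
  rw [← Real.sqrt_mul (normSqV_nonneg u), Complex.norm_def]
  exact Real.sqrt_le_sqrt (cs u v)

lemma bessel2 {M : ℕ} {u v : Fin M → ℂ} (x : Fin M → ℂ)
    (huu : star u ⬝ᵥ u = 1) (hvv : star v ⬝ᵥ v = 1) (huv : star u ⬝ᵥ v = 0) :
    Complex.normSq (star u ⬝ᵥ x) + Complex.normSq (star v ⬝ᵥ x) ≤ normSqV x := by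
  set c₁ : ℂ := star u ⬝ᵥ x with hc₁
  set c₂ : ℂ := star v ⬝ᵥ x with hc₂
  set y : Fin M → ℂ := x - c₁ • u - c₂ • v with hy
  have hvu : star v ⬝ᵥ u = 0 := by rw [star_dotProduct, huv, star_zero]
  have hxu : star x ⬝ᵥ u = star c₁ := by rw [star_dotProduct]
  have hxv : star x ⬝ᵥ v = star c₂ := by rw [star_dotProduct]
  have key : star y ⬝ᵥ y
      = star x ⬝ᵥ x - (Complex.normSq c₁ : ℂ) - (Complex.normSq c₂ : ℂ) := by
    simp only [hy, star_sub, star_smul, sub_dotProduct, dotProduct_sub, smul_dotProduct,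
      dotProduct_smul, smul_eq_mul, huu, hvv, huv, hvu, hxu, hxv, ← hc₁, ← hc₂,
      Complex.star_def]
    rw [show (starRingEnd ℂ) c₁ * c₁ = (Complex.normSq c₁ : ℂ) from
        by rw [mul_comm]; exact Complex.mul_conj c₁,
      show (starRingEnd ℂ) c₂ * c₂ = (Complex.normSq c₂ : ℂ) from
        by rw [mul_comm]; exact Complex.mul_conj c₂]
    ring
  have h0 : (0:ℝ) ≤ (star y ⬝ᵥ y).re := by
    rw [dot_self_eq]; exact_mod_cast normSqV_nonneg y
  rw [key] at h0
  simp only [Complex.sub_re, Complex.ofReal_re] at h0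
  rw [dot_self_eq] at h0
  simp only [Complex.ofReal_re] at h0
  linarith

lemma quad_factor {M : ℕ} (B : Matrix (Fin M) (Fin M) ℂ) (x y : Fin M → ℂ) :
    star x ⬝ᵥ ((Bᴴ * B) *ᵥ y) = star (B *ᵥ x) ⬝ᵥ (B *ᵥ y) := by
  rw [← mulVec_mulVec, dotProduct_mulVec, star_mulVec]

lemma trace_re' {M : ℕ} (B : Matrix (Fin M) (Fin M) ℂ) :
    ((Bᴴ * B).trace).re = ∑ i, ∑ j, Complex.normSq (B i j) := by
  rw [Matrix.trace]
  have : ∀ j, (Bᴴ * B).diag j = ((∑ i, Complex.normSq (B i j) : ℝ) : ℂ) := by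
    intro j
    simp [Matrix.diag, Matrix.mul_apply, conjTranspose_apply, Complex.normSq_eq_conj_mul_self,
      Complex.star_def]
  rw [Finset.sum_congr rfl fun j _ => this j, ← Complex.ofReal_sum, Complex.ofReal_re]
  exact Finset.sum_comm

lemma trace_bound {M : ℕ} (B : Matrix (Fin M) (Fin M) ℂ) {u v : Fin M → ℂ}
    (huu : star u ⬝ᵥ u = 1) (hvv : star v ⬝ᵥ v = 1) (huv : star u ⬝ᵥ v = 0) :
    normSqV (B *ᵥ u) + normSqV (B *ᵥ v) ≤ ((Bᴴ * B).trace).re := by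
  rw [trace_re']
  have key : ∀ i : Fin M,
      Complex.normSq ((B *ᵥ u) i) + Complex.normSq ((B *ᵥ v) i)
        ≤ ∑ j, Complex.normSq (B i j) := by
    intro i
    set r : Fin M → ℂ := star (B i) with hr
    have h1 : ∀ z : Fin M → ℂ, (B *ᵥ z) i = star (star z ⬝ᵥ r) := by
      intro z
      rw [star_dotProduct, star_star]
      simp [mulVec, dotProduct, hr]
    have hnr : normSqV r = ∑ j, Complex.normSq (B i j) := by
      simp [normSqV, hr, Complex.normSq_conj, Pi.star_apply, Complex.star_def]
    have := bessel2 r huu hvv huv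
    rw [hnr] at this
    calc Complex.normSq ((B *ᵥ u) i) + Complex.normSq ((B *ᵥ v) i)
        = Complex.normSq (star u ⬝ᵥ r) + Complex.normSq (star v ⬝ᵥ r) := by
          rw [h1 u, h1 v]; simp [Complex.star_def, Complex.normSq_conj]
      _ ≤ _ := this
  calc normSqV (B *ᵥ u) + normSqV (B *ᵥ v)
      = ∑ i, (Complex.normSq ((B *ᵥ u) i) + Complex.normSq ((B *ᵥ v) i)) := by
        rw [normSqV, normSqV, Finset.sum_add_distrib]
    _ ≤ ∑ i, ∑ j, Complex.normSq (B i j) := Finset.sum_le_sum fun i _ => key i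

lemma dot_lcombo {M : ℕ} (c₁ c₂ : ℂ) (u v x : Fin M → ℂ) :
    star (c₁ • u + c₂ • v) ⬝ᵥ x = star c₁ * (star u ⬝ᵥ x) + star c₂ * (star v ⬝ᵥ x) := by
  simp [star_add, star_smul, add_dotProduct, smul_dotProduct, smul_eq_mul]

lemma dot_combo {M : ℕ} {u v : Fin M → ℂ} (c₁ c₂ d₁ d₂ : ℂ)
    (huu : star u ⬝ᵥ u = 1) (hvv : star v ⬝ᵥ v = 1) (huv : star u ⬝ᵥ v = 0) :
    star (c₁ • u + c₂ • v) ⬝ᵥ (d₁ • u + d₂ • v) = star c₁ * d₁ + star c₂ * d₂ := by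
  have hvu : star v ⬝ᵥ u = 0 := by rw [star_dotProduct, huv, star_zero]
  simp only [dot_lcombo, dotProduct_add, dotProduct_smul, huu, hvv, huv, hvu, smul_eq_mul]
  ring

lemma normSqV_combo_le {M : ℕ} (c₁ c₂ : ℂ) (x y : Fin M → ℂ) :
    normSqV (c₁ • x + c₂ • y) ≤ (‖c₁‖ * Real.sqrt (normSqV x)
      + ‖c₂‖ * Real.sqrt (normSqV y))^2 := by
  set p : ℂ := star x ⬝ᵥ y with hp
  have hyx : star y ⬝ᵥ x = star p := by rw [star_dotProduct]
  have key : ((normSqV (c₁ • x + c₂ • y) : ℝ) : ℂ)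
      = (Complex.normSq c₁ * normSqV x + Complex.normSq c₂ * normSqV y : ℝ)
        + (star c₁ * c₂ * p + star (star c₁ * c₂ * p)) := by
    rw [← dot_self_eq]
    simp only [dot_lcombo, dotProduct_add, dotProduct_smul, smul_eq_mul, dot_self_eq, hyx, ← hp]
    simp only [Complex.star_def, _root_.map_mul, Complex.conj_conj]
    push_cast
    have e1 : c₁ * (starRingEnd ℂ) c₁ = (Complex.normSq c₁ : ℂ) := Complex.mul_conj c₁
    have e2 : c₂ * (starRingEnd ℂ) c₂ = (Complex.normSq c₂ : ℂ) := Complex.mul_conj c₂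
    linear_combination ((normSqV x : ℝ) : ℂ) * e1 + ((normSqV y : ℝ) : ℂ) * e2
  have hre : normSqV (c₁ • x + c₂ • y)
      = Complex.normSq c₁ * normSqV x + Complex.normSq c₂ * normSqV y
        + (((starRingEnd ℂ) c₁ * c₂ * p).re + ((starRingEnd ℂ) c₁ * c₂ * p).re) := by
    have h := congrArg Complex.re key
    simp only [Complex.add_re, Complex.ofReal_re, Complex.star_def, Complex.conj_re] at h
    exact h
  rw [hre]
  have hcross : ((starRingEnd ℂ) c₁ * c₂ * p).re ≤ ‖c₁‖ * ‖c₂‖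
      * (Real.sqrt (normSqV x) * Real.sqrt (normSqV y)) := by
    calc ((starRingEnd ℂ) c₁ * c₂ * p).re ≤ ‖(starRingEnd ℂ) c₁ * c₂ * p‖ :=
        Complex.re_le_norm _
      _ = ‖c₁‖ * ‖c₂‖ * ‖p‖ := by
          simp [_root_.map_mul, Complex.norm_conj, Complex.star_def]
      _ ≤ ‖c₁‖ * ‖c₂‖ * (Real.sqrt (normSqV x) * Real.sqrt (normSqV y)) := by
          apply mul_le_mul_of_nonneg_left (abs_dot_le x y)
          positivity
  have hx2 : Real.sqrt (normSqV x) ^ 2 = normSqV x := Real.sq_sqrt (normSqV_nonneg x)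
  have hy2 : Real.sqrt (normSqV y) ^ 2 = normSqV y := Real.sq_sqrt (normSqV_nonneg y)
  have h1 : Complex.normSq c₁ = ‖c₁‖ ^ 2 := (Complex.sq_norm c₁).symm
  have h2 : Complex.normSq c₂ = ‖c₂‖ ^ 2 := (Complex.sq_norm c₂).symm
  nlinarith [hcross]

lemma key_abstract (p q A S C D : ℝ) (hp : 0 ≤ p) (hq : 0 ≤ q)
    (hA : 0 ≤ A) (hS : 0 ≤ S) (hC : 0 ≤ C) (hD : 0 ≤ D)
    (hAS : S ≤ A) (hCD : D ≤ C) (hiden : A^2 - S^2 = C^2 - D^2)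
    (h1 : p * C ≤ q * S) (h2 : p * D ≤ q * A) :
    p * A + q * D ≤ p * S + q * C := by
  rcases eq_or_lt_of_le hAS with hEQ | hLT
  · have : C^2 = D^2 := by nlinarith
    have hCD' : C = D := by nlinarith
    rw [hEQ, hCD']
  · have hApos : 0 < A := lt_of_le_of_lt hS hLT
    have hC2 : D^2 < C^2 := by nlinarith
    have hCgt : D < C := by nlinarith
    have hfac : 0 < (A + S) * (C + D) ∨ C + D = 0 := by
      rcases eq_or_lt_of_le hD with h | h
      · rcases eq_or_lt_of_le hC with h' | h'
        · right; rw [← h, ← h']; ring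
        · left; positivity
      · left; positivity
    rcases hfac with hpos | hzero
    · have hkey : p * (A - S) * ((A + S) * (C + D)) ≤ q * (C - D) * ((A + S) * (C + D)) := by
        have e1 : p * (A - S) * ((A + S) * (C + D)) = p * (C + D) * (A^2 - S^2) := by ring
        have e2 : q * (C - D) * ((A + S) * (C + D)) = q * (A + S) * (C^2 - D^2) := by ring
        rw [e1, e2, ← hiden]
        have h3 : p * (C + D) ≤ q * (A + S) := by nlinarith
        nlinarith [sq_nonneg A, sq_nonneg S]
      have := (mul_le_mul_iff_of_pos_right hpos).mp hkey
      linarith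
    · have : C = 0 := by linarith [hq, hD]
      nlinarith

lemma key_real (p q s a d Pt : ℝ) (hp : 0 ≤ p) (hq : 0 ≤ q) (hs : 0 ≤ s)
    (hsa : s ≤ a) (hd : 0 ≤ d) (had : a + d ≤ Pt)
    (hlow : Pt * p^2 ≤ (p^2 + q^2) * s) :
    (p * Real.sqrt a + q * Real.sqrt d)^2 ≤ (p * Real.sqrt s + q * Real.sqrt (Pt - s))^2 := by
  have ha : 0 ≤ a := le_trans hs hsa
  have hsPt : s ≤ Pt := by linarith
  have haPt : a ≤ Pt := by linarith
  set A := Real.sqrt a; set S := Real.sqrt s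
  set C := Real.sqrt (Pt - s); set D := Real.sqrt (Pt - a)
  have hA : 0 ≤ A := Real.sqrt_nonneg _
  have hS : 0 ≤ S := Real.sqrt_nonneg _
  have hC : 0 ≤ C := Real.sqrt_nonneg _
  have hD : 0 ≤ D := Real.sqrt_nonneg _
  have hA2 : A^2 = a := Real.sq_sqrt ha
  have hS2 : S^2 = s := Real.sq_sqrt hs
  have hC2 : C^2 = Pt - s := Real.sq_sqrt (by linarith)
  have hD2 : D^2 = Pt - a := Real.sq_sqrt (by linarith)
  have hstep : p * A + q * D ≤ p * S + q * C := by
    apply key_abstract p q A S C D hp hq hA hS hC hD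
    · exact Real.sqrt_le_sqrt hsa
    · exact Real.sqrt_le_sqrt (by linarith)
    · rw [hA2, hS2, hC2, hD2]; ring
    · have : (p*C)^2 ≤ (q*S)^2 := by rw [mul_pow, mul_pow, hC2, hS2]; nlinarith
      nlinarith [mul_nonneg hp hC, mul_nonneg hq hS]
    · have : (p*D)^2 ≤ (q*A)^2 := by rw [mul_pow, mul_pow, hD2, hA2]; nlinarith
      nlinarith [mul_nonneg hp hD, mul_nonneg hq hA]
  have hdD : Real.sqrt d ≤ D := Real.sqrt_le_sqrt (by linarith)
  have h1 : p * A + q * Real.sqrt d ≤ p * S + q * C := by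
    have := mul_le_mul_of_nonneg_left hdD hq
    linarith
  have hl : 0 ≤ p * A + q * Real.sqrt d := by positivity
  exact pow_le_pow_left₀ hl h1 2

lemma star_real_smul {M : ℕ} (c : ℝ) (v : Fin M → ℂ) :
    star ((c:ℂ) • v) = (c:ℂ) • star v := by
  rw [star_smul]
  congr 1
  simp [Complex.star_def, Complex.conj_ofReal]

end Helpers

set_option maxHeartbeats 1600000

/-- Theorem 1, second case (optimality): under `hᴴ b ≠ 0`, linear independence of `h, b`
and `P_t |hᴴb|²/‖b‖² ≤ σ²γ̄ ≤ P_t ‖h‖²`, every feasible pair of the rank-relaxed problem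
satisfies `bᴴ(R₁+R')b ≤ (|β|√(σ²γ̄)/‖h‖ + ‖b⊥‖√(P_t − σ²γ̄/‖h‖²))²`, and the closed-form
beamformer `w̄` of Eq. (23) yields an optimal solution `(w̄ w̄ᴴ, 0)` of problem (22). -/
theorem stmt_3 {M : ℕ} (hM : 1 ≤ M) (h b : Fin M → ℂ) (hh : h ≠ 0) (hb : b ≠ 0)
    (Pt σ γ : ℝ) (hPt : 0 < Pt) (hσ : 0 < σ) (hγ : 0 ≤ γ)
    (hbar : Fin M → ℂ) (hhbar : hbar = (normV h : ℂ)⁻¹ • h)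
    (β : ℂ) (hβ : β = star hbar ⬝ᵥ b)
    (bperp : Fin M → ℂ) (hbperp : bperp = b - β • hbar)
    (bperpbar : Fin M → ℂ) (hbperpbar : bperpbar = (normV bperp : ℂ)⁻¹ • bperp)
    (hβne : star h ⬝ᵥ b ≠ 0)
    (hindep : LinearIndependent ℂ ![h, b])
    (hlow : Pt * Complex.normSq (star h ⬝ᵥ b) / normSqV b ≤ σ ^ 2 * γ)
    (hhigh : σ ^ 2 * γ ≤ Pt * normSqV h)
    (w : Fin M → ℂ)
    (hw : w = ((Real.sqrt (σ ^ 2 * γ / normSqV h) : ℝ) : ℂ) • ((β / (‖β‖ : ℂ)) • hbar)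
            + ((Real.sqrt (Pt - σ ^ 2 * γ / normSqV h) : ℝ) : ℂ) • bperpbar) :
    (∀ R₁ R', FeasibleRelaxed Pt σ γ h R₁ R' →
      quadForm (R₁ + R') b ≤ (‖β‖ * Real.sqrt (σ ^ 2 * γ) / normV h
        + normV bperp * Real.sqrt (Pt - σ ^ 2 * γ / normSqV h)) ^ 2) ∧
    Feasible22 Pt σ γ h (vecMulVec w (star w)) 0 ∧
    ∀ R₁ R', Feasible22 Pt σ γ h R₁ R' →
      quadForm (R₁ + R') b ≤ quadForm (vecMulVec w (star w) + 0) b := by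
  -- basic positivity facts
  have hs0 : (0:ℝ) ≤ σ ^ 2 * γ := by positivity
  have hNh : 0 < normSqV h := normSqV_pos hh
  have hnhpos : 0 < normV h := Real.sqrt_pos.mpr hNh
  have hnh2 : normV h ^ 2 = normSqV h := Real.sq_sqrt hNh.le
  have hnhC : ((normV h : ℝ) : ℂ) ≠ 0 := by exact_mod_cast hnhpos.ne'
  have hhbar' : hbar = (((normV h)⁻¹ : ℝ) : ℂ) • h := by rw [hhbar]; norm_cast
  -- orthonormality of hbar
  have huu : star hbar ⬝ᵥ hbar = 1 := by
    rw [hhbar', star_real_smul, smul_dotProduct, dotProduct_smul, dot_self_eq,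
      smul_eq_mul, smul_eq_mul, ← Complex.ofReal_mul, ← Complex.ofReal_mul,
      ← Complex.ofReal_one]
    congr 1
    have hne : normV h ≠ 0 := hnhpos.ne'
    field_simp
    nlinarith [hnh2]
  have h_dot_hbar : star h ⬝ᵥ hbar = ((normV h : ℝ) : ℂ) := by
    rw [hhbar', dotProduct_smul, dot_self_eq, smul_eq_mul, ← Complex.ofReal_mul]
    congr 1
    have hne : normV h ≠ 0 := hnhpos.ne'
    field_simp
    nlinarith [hnh2]
  have hβ_eq : star h ⬝ᵥ b = ((normV h : ℝ) : ℂ) * β := by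
    rw [hβ, hhbar', star_real_smul, smul_dotProduct, smul_eq_mul, ← mul_assoc,
      ← Complex.ofReal_mul, mul_inv_cancel₀ hnhpos.ne']
    simp
  have hβ0 : β ≠ 0 := by
    intro h0
    apply hβne
    rw [hβ_eq, h0, mul_zero]
  have hnsβpos : 0 < Complex.normSq β := Complex.normSq_pos.mpr hβ0
  have habsβpos : 0 < ‖β‖ := norm_pos_iff.mpr hβ0
  -- orthogonality of bperp
  have horth : star hbar ⬝ᵥ bperp = 0 := by
    rw [hbperp, dotProduct_sub, dotProduct_smul, huu, ← hβ, smul_eq_mul, mul_one, sub_self]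
  have horth_h : star h ⬝ᵥ bperp = 0 := by
    rw [hbperp, dotProduct_sub, dotProduct_smul, h_dot_hbar, hβ_eq, smul_eq_mul, mul_comm,
      sub_self]
  -- bperp ≠ 0
  have hbperp0 : bperp ≠ 0 := by
    intro h0
    have hbeq : b = (β * (((normV h)⁻¹ : ℝ) : ℂ)) • h := by
      have h2 : b - β • hbar = 0 := by rw [← hbperp, h0]
      rw [sub_eq_zero.mp h2, hhbar', smul_smul]
    have hli := Fintype.linearIndependent_iff.mp hindep ![β * (((normV h)⁻¹ : ℝ) : ℂ), -1]
    have hz : ∑ i, (![β * (((normV h)⁻¹ : ℝ) : ℂ), -1] : Fin 2 → ℂ) i • (![h, b] : Fin 2 → _) i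
        = 0 := by
      rw [Fin.sum_univ_two]
      simp only [Matrix.cons_val_zero, Matrix.cons_val_one, Matrix.head_cons]
      rw [← hbeq]
      module
    have := hli hz 1
    simp at this
  have hNp : 0 < normSqV bperp := normSqV_pos hbperp0
  have hnppos : 0 < normV bperp := Real.sqrt_pos.mpr hNp
  have hnp2 : normV bperp ^ 2 = normSqV bperp := Real.sq_sqrt hNp.le
  have hbperpbar' : bperpbar = (((normV bperp)⁻¹ : ℝ) : ℂ) • bperp := by
    rw [hbperpbar]; norm_cast
  have hvv : star bperpbar ⬝ᵥ bperpbar = 1 := by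
    rw [hbperpbar', star_real_smul, smul_dotProduct, dotProduct_smul, dot_self_eq,
      smul_eq_mul, smul_eq_mul, ← Complex.ofReal_mul, ← Complex.ofReal_mul,
      ← Complex.ofReal_one]
    congr 1
    have hne : normV bperp ≠ 0 := hnppos.ne'
    field_simp
    nlinarith [hnp2]
  have huv : star hbar ⬝ᵥ bperpbar = 0 := by
    rw [hbperpbar', dotProduct_smul, horth, smul_zero]
  have h_dot_perpbar : star h ⬝ᵥ bperpbar = 0 := by
    rw [hbperpbar', dotProduct_smul, horth_h, smul_zero]
  have hvu : star bperpbar ⬝ᵥ hbar = 0 := by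
    rw [star_dotProduct, huv, star_zero]
  -- decomposition of b
  have hdecomp : b = β • hbar + ((normV bperp : ℝ) : ℂ) • bperpbar := by
    rw [hbperpbar', smul_smul, ← Complex.ofReal_mul, mul_inv_cancel₀ hnppos.ne']
    rw [Complex.ofReal_one, one_smul]
    rw [hbperp]
    module
  have hbar_b : star hbar ⬝ᵥ b = β := hβ.symm
  have hperp_b : star bperpbar ⬝ᵥ b = ((normV bperp : ℝ) : ℂ) := by
    conv_lhs => rw [hdecomp]
    rw [dotProduct_add, dotProduct_smul, dotProduct_smul, hvv, hvu, smul_eq_mul, smul_eq_mul,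
      mul_zero, mul_one, zero_add]
  -- |hᴴb|² and ‖b‖²
  have hnormSqhb : Complex.normSq (star h ⬝ᵥ b) = normSqV h * Complex.normSq β := by
    rw [hβ_eq, Complex.normSq_mul, Complex.normSq_ofReal, ← hnh2]
    ring
  have hNb : normSqV b = Complex.normSq β + normSqV bperp := by
    have key : ((normSqV b : ℝ) : ℂ) = ((Complex.normSq β + normSqV bperp : ℝ) : ℂ) := by
      rw [← dot_self_eq]
      conv_lhs => rw [hdecomp]
      rw [dot_combo _ _ _ _ huu hvv huv,
        show (star β) * β = (Complex.normSq β : ℂ) from by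
          rw [mul_comm]; exact Complex.mul_conj β,
        show star ((normV bperp : ℝ) : ℂ) = ((normV bperp : ℝ) : ℂ) from by
          rw [Complex.star_def, Complex.conj_ofReal],
        ← Complex.ofReal_mul,
        show (normV bperp * normV bperp : ℝ) = normSqV bperp from by rw [← hnp2]; ring,
        ← Complex.ofReal_add]
    exact_mod_cast key
  -- scalar s
  set s : ℝ := σ ^ 2 * γ / normSqV h with hs_def
  have hsnn : 0 ≤ s := by rw [hs_def]; positivity
  have hsPt : s ≤ Pt := by
    rw [hs_def, div_le_iff₀ hNh]; nlinarith [hhigh]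
  have hPts : 0 ≤ Pt - s := by linarith
  have hsqrt_s : Real.sqrt s = Real.sqrt (σ ^ 2 * γ) / normV h := by
    rw [hs_def, Real.sqrt_div hs0]
    rfl
  -- Part 1: the upper bound for all feasible pairs of the relaxed problem
  have hpart1 : ∀ R₁ R', FeasibleRelaxed Pt σ γ h R₁ R' →
      quadForm (R₁ + R') b ≤ (‖β‖ * Real.sqrt (σ ^ 2 * γ) / normV h
        + normV bperp * Real.sqrt (Pt - s)) ^ 2 := by
    rintro R₁ R' ⟨hR₁, hR', hγle, htr⟩
    have hR : (R₁ + R').PosSemidef := hR₁.add hR'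
    obtain ⟨B, hB⟩ : ∃ B : Matrix (Fin M) (Fin M) ℂ, R₁ + R' = Bᴴ * B := by
      open scoped MatrixOrder in
      obtain ⟨B, hB⟩ := CStarAlgebra.nonneg_iff_eq_star_mul_self.mp hR.nonneg
      exact ⟨B, hB⟩
    set a := normSqV (B *ᵥ hbar) with ha_def
    set d := normSqV (B *ᵥ bperpbar) with hd_def
    have hqa : quadForm (R₁ + R') hbar = a := by
      rw [quadForm, hB, quad_factor, dot_self_eq, Complex.ofReal_re]
    have hq' : 0 ≤ quadForm R' h := by
      simpa [quadForm] using (Complex.le_def.mp (hR'.dotProduct_mulVec_nonneg h)).1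
    have hsum : quadForm (R₁ + R') h = quadForm R₁ h + quadForm R' h := by
      rw [quadForm, quadForm, quadForm, add_mulVec, dotProduct_add, Complex.add_re]
    have hh' : h = ((normV h : ℝ) : ℂ) • hbar := by
      rw [hhbar', smul_smul, ← Complex.ofReal_mul, mul_inv_cancel₀ hnhpos.ne']
      simp
    have hscale : quadForm (R₁ + R') h = normSqV h * a := by
      rw [← hqa, quadForm, quadForm]
      conv_lhs => rw [hh']
      rw [star_real_smul, smul_dotProduct, mulVec_smul, dotProduct_smul, smul_eq_mul,
        smul_eq_mul, ← mul_assoc, ← Complex.ofReal_mul, Complex.re_ofReal_mul, ← hnh2]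
      ring
    have hsa : s ≤ a := by
      rw [hs_def, div_le_iff₀ hNh]
      have h2 : σ ^ 2 * γ ≤ quadForm (R₁ + R') h := by rw [hsum]; linarith
      rw [hscale] at h2; linarith
    have had : a + d ≤ Pt := by
      have h1 := trace_bound B huu hvv huv
      rw [← hB] at h1
      exact h1.trans htr
    have hb1 : quadForm (R₁ + R') b = normSqV (B *ᵥ b) := by
      rw [quadForm, hB, quad_factor, dot_self_eq, Complex.ofReal_re]
    have hb2 : (B *ᵥ b) = β • (B *ᵥ hbar) + ((normV bperp : ℝ) : ℂ) • (B *ᵥ bperpbar) := by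
      conv_lhs => rw [hdecomp]
      rw [mulVec_add, mulVec_smul, mulVec_smul]
    have hb3 : quadForm (R₁ + R') b ≤ (‖β‖ * Real.sqrt a
        + normV bperp * Real.sqrt d) ^ 2 := by
      rw [hb1, hb2]
      have h3 := normSqV_combo_le β ((normV bperp : ℝ) : ℂ) (B *ᵥ hbar) (B *ᵥ bperpbar)
      rwa [Complex.norm_real, Real.norm_of_nonneg hnppos.le] at h3
    have hNbpos : 0 < normSqV b := normSqV_pos hb
    have hlow' : Pt * ‖β‖ ^ 2
        ≤ (‖β‖ ^ 2 + normV bperp ^ 2) * s := by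
      rw [Complex.sq_norm, hnp2, hs_def, ← mul_div_assoc, le_div_iff₀ hNh]
      rw [div_le_iff₀ hNbpos] at hlow
      rw [hnormSqhb, hNb] at hlow
      nlinarith [hlow]
    have hkey := key_real (‖β‖) (normV bperp) s a d Pt
      (norm_nonneg β) hnppos.le hsnn hsa (normSqV_nonneg _) had hlow'
    calc quadForm (R₁ + R') b
        ≤ (‖β‖ * Real.sqrt a + normV bperp * Real.sqrt d) ^ 2 := hb3
      _ ≤ (‖β‖ * Real.sqrt s + normV bperp * Real.sqrt (Pt - s)) ^ 2 := hkey
      _ = (‖β‖ * Real.sqrt (σ ^ 2 * γ) / normV h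
            + normV bperp * Real.sqrt (Pt - s)) ^ 2 := by
          rw [hsqrt_s, ← mul_div_assoc]
  -- the beamformer coefficients
  set c₁ : ℂ := ((Real.sqrt s : ℝ) : ℂ) * (β / (‖β‖ : ℂ)) with hc₁
  set c₂ : ℂ := ((Real.sqrt (Pt - s) : ℝ) : ℂ) with hc₂
  have hw' : w = c₁ • hbar + c₂ • bperpbar := by rw [hw, smul_smul]
  have habsC : ((‖β‖ : ℝ) : ℂ) ≠ 0 := by exact_mod_cast habsβpos.ne'
  have hnsc₁ : Complex.normSq c₁ = s := by
    rw [hc₁, Complex.normSq_mul, Complex.normSq_ofReal, Real.mul_self_sqrt hsnn,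
      Complex.normSq_div, Complex.normSq_ofReal,
      show ‖β‖ * ‖β‖ = Complex.normSq β from by rw [← Complex.sq_norm]; ring,
      div_self hnsβpos.ne', mul_one]
  have hnsc₂ : Complex.normSq c₂ = Pt - s := by
    rw [hc₂, Complex.normSq_ofReal, Real.mul_self_sqrt hPts]
  have quad_w : ∀ x : Fin M → ℂ, quadForm (vecMulVec w (star w)) x
      = Complex.normSq (star w ⬝ᵥ x) := by
    intro x
    rw [quadForm, mulVec_vecMulVec', dotProduct_smul, smul_eq_mul,
      show star x ⬝ᵥ w = star (star w ⬝ᵥ x) from by rw [star_dotProduct],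
      Complex.star_def, Complex.mul_conj, Complex.ofReal_re]
  have hwh : star w ⬝ᵥ h = star c₁ * ((normV h : ℝ) : ℂ) := by
    rw [hw', dot_lcombo,
      show star hbar ⬝ᵥ h = ((normV h : ℝ) : ℂ) from by
        rw [star_dotProduct, h_dot_hbar, Complex.star_def, Complex.conj_ofReal],
      show star bperpbar ⬝ᵥ h = 0 from by rw [star_dotProduct, h_dot_perpbar, star_zero],
      mul_zero, add_zero]
  have hquadwh : quadForm (vecMulVec w (star w)) h = σ ^ 2 * γ := by
    rw [quad_w, hwh, Complex.normSq_mul, Complex.normSq_ofReal,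
      show Complex.normSq (star c₁) = Complex.normSq c₁ from by
        rw [Complex.star_def, Complex.normSq_conj],
      hnsc₁, show normV h * normV h = normSqV h from by rw [← hnh2]; ring,
      hs_def, div_mul_cancel₀ _ hNh.ne']
  have hherm : (vecMulVec w (star w)).IsHermitian := by
    ext i j
    simp only [Matrix.conjTranspose_apply, Matrix.vecMulVec_apply, star_mul', star_star,
      Pi.star_apply]
    ring
  have hpsd : (vecMulVec w (star w)).PosSemidef := by
    refine .of_dotProduct_mulVec_nonneg hherm fun x => ?_
    rw [mulVec_vecMulVec', dotProduct_smul, smul_eq_mul,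
      show star x ⬝ᵥ w = star (star w ⬝ᵥ x) from by rw [star_dotProduct],
      Complex.star_def, Complex.mul_conj]
    exact Complex.zero_le_real.mpr (Complex.normSq_nonneg _)
  have htrw : ((vecMulVec w (star w) + 0).trace).re = Pt := by
    rw [add_zero]
    have h1 : (vecMulVec w (star w)).trace = (normSqV w : ℂ) := by
      rw [Matrix.trace]
      have h0 : ∀ i, (vecMulVec w (star w)).diag i = ((Complex.normSq (w i) : ℝ) : ℂ) :=
        fun i => by
          simp only [Matrix.diag, Matrix.vecMulVec_apply, Pi.star_apply, Complex.star_def,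
            Complex.mul_conj]
      rw [Finset.sum_congr rfl fun i _ => h0 i, ← Complex.ofReal_sum]
      rfl
    rw [h1, Complex.ofReal_re]
    have h2 : ((normSqV w : ℝ) : ℂ) = ((Pt : ℝ) : ℂ) := by
      rw [← dot_self_eq]
      conv_lhs => rw [hw']
      rw [dot_combo _ _ _ _ huu hvv huv,
        show star c₁ * c₁ = (Complex.normSq c₁ : ℂ) from by
          rw [mul_comm, Complex.star_def]; exact Complex.mul_conj c₁,
        show star c₂ * c₂ = (Complex.normSq c₂ : ℂ) from by
          rw [mul_comm, Complex.star_def]; exact Complex.mul_conj c₂,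
        hnsc₁, hnsc₂, ← Complex.ofReal_add]
      norm_num
    exact_mod_cast h2
  have hrank1 : (vecMulVec w (star w)).rank ≤ 1 := by
    rw [Matrix.vecMulVec_eq (Fin 1)]
    exact (Matrix.rank_mul_le_left _ _).trans
      ((Matrix.rank_le_card_width _).trans (by simp))
  have hfeas : Feasible22 Pt σ γ h (vecMulVec w (star w)) 0 := by
    refine ⟨⟨hpsd, Matrix.PosSemidef.zero, ?_, ?_⟩, hrank1, ?_⟩
    · rw [hquadwh]
    · rw [htrw]
    · rw [Matrix.rank_zero]
      exact Nat.zero_le _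
  -- the value attained by the beamformer
  have hstar1 : star c₁ * β = ((Real.sqrt s * ‖β‖ : ℝ) : ℂ) := by
    rw [hc₁, star_mul', star_div₀,
      show star ((‖β‖ : ℝ) : ℂ) = ((‖β‖ : ℝ) : ℂ) from by
        rw [Complex.star_def, Complex.conj_ofReal],
      show star (((Real.sqrt s : ℝ)) : ℂ) = (((Real.sqrt s : ℝ)) : ℂ) from by
        rw [Complex.star_def, Complex.conj_ofReal],
      Complex.ofReal_mul]
    have hβconj : (starRingEnd ℂ) β * β = (((‖β‖ : ℝ) : ℂ)) ^ 2 := by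
      rw [mul_comm, Complex.mul_conj, ← Complex.sq_norm]
      push_cast
      ring
    simp only [Complex.star_def]
    field_simp
    linear_combination (((Real.sqrt s : ℝ) : ℂ)) * hβconj
  have hwb : star w ⬝ᵥ b
      = ((‖β‖ * Real.sqrt s + normV bperp * Real.sqrt (Pt - s) : ℝ) : ℂ) := by
    rw [hw', dot_lcombo, hbar_b, hperp_b, hstar1,
      show star c₂ = c₂ from by rw [hc₂, Complex.star_def, Complex.conj_ofReal], hc₂]
    push_cast
    ring
  have hquadwb : quadForm (vecMulVec w (star w) + 0) b
      = (‖β‖ * Real.sqrt (σ ^ 2 * γ) / normV h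
          + normV bperp * Real.sqrt (Pt - s)) ^ 2 := by
    rw [add_zero, quad_w, hwb, Complex.normSq_ofReal, hsqrt_s]
    ring
  exact ⟨hpart1, hfeas, fun R₁ R' hf => by rw [hquadwb]; exact hpart1 R₁ R' hf.1⟩
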